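/- Let (H, m, u, Δ, ε, ω) be a dual quasi-bialgebra. For every left H-comodule V, the map η_V: V → (V⊗H)^{coH}, v ↦ v ⊗ 1_H, is a bijection onto the right coinvariants of the dual quasi-Hopf bicomodule V⊗H, with inverse induced by v⊗h ↦ ε(h)v. -/

import Mathlib

open TensorProduct LinearMap

noncomputable section

namespace DQB

variable (k : Type*) [CommRing k]
variable (H : Type*) [AddCommGroup H] [Module k H]

/-- Convolution of two `k`-valued functionals on a module `C` equipped with a
comultiplication-like map `δ`. -/
def conv (C : Type*) [AddCommGroup C] [Module k C]
    (δ : C →ₗ[k] C ⊗[k] C) (f g : C →ₗ[k] k) : C →ₗ[k] k :=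
  (LinearMap.mul' k k) ∘ₗ (TensorProduct.map f g) ∘ₗ δ

/-- Convolution `f * g` where `f` is module-valued and `g` is a functional. -/
def convMK (C M : Type*) [AddCommGroup C] [Module k C] [AddCommGroup M] [Module k M]
    (δ : C →ₗ[k] C ⊗[k] C) (f : C →ₗ[k] M) (g : C →ₗ[k] k) : C →ₗ[k] M :=
  (TensorProduct.rid k M).toLinearMap ∘ₗ (TensorProduct.map f g) ∘ₗ δ

/-- Convolution `g * f` where `g` is a functional and `f` is module-valued. -/
def convKM (C M : Type*) [AddCommGroup C] [Module k C] [AddCommGroup M] [Module k M]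
    (δ : C →ₗ[k] C ⊗[k] C) (g : C →ₗ[k] k) (f : C →ₗ[k] M) : C →ₗ[k] M :=
  (TensorProduct.lid k M).toLinearMap ∘ₗ (TensorProduct.map g f) ∘ₗ δ

/-- `(a ⊗ b) ⊗ c ↦ (a ⊗ c) ⊗ b`. -/
def exch (A B C : Type*) [AddCommGroup A] [Module k A] [AddCommGroup B] [Module k B]
    [AddCommGroup C] [Module k C] : (A ⊗[k] B) ⊗[k] C →ₗ[k] (A ⊗[k] C) ⊗[k] B :=
  (TensorProduct.assoc k A C B).symm.toLinearMap
    ∘ₗ lTensor A (TensorProduct.comm k B C).toLinearMap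
    ∘ₗ (TensorProduct.assoc k A B C).toLinearMap

/-- `a ⊗ (b ⊗ c) ↦ b ⊗ (a ⊗ c)`. -/
def exch' (A B C : Type*) [AddCommGroup A] [Module k A] [AddCommGroup B] [Module k B]
    [AddCommGroup C] [Module k C] : A ⊗[k] (B ⊗[k] C) →ₗ[k] B ⊗[k] (A ⊗[k] C) :=
  (TensorProduct.assoc k B A C).toLinearMap
    ∘ₗ rTensor C (TensorProduct.comm k A B).toLinearMap
    ∘ₗ (TensorProduct.assoc k A B C).symm.toLinearMap

variable (Δ : H →ₗ[k] H ⊗[k] H) (ε : H →ₗ[k] k)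

/-- `h ↦ h₁ ⊗ (h₂ ⊗ h₃)`. -/
def comul2 : H →ₗ[k] H ⊗[k] (H ⊗[k] H) := (lTensor H Δ) ∘ₗ Δ

/-- The codiagonal comultiplication of `H ⊗ H`. -/
def comulT : H ⊗[k] H →ₗ[k] (H ⊗[k] H) ⊗[k] (H ⊗[k] H) :=
  (TensorProduct.tensorTensorTensorComm k H H H H).toLinearMap ∘ₗ TensorProduct.map Δ Δ

/-- The codiagonal comultiplication of `H ⊗ (H ⊗ H)`. -/
def comul3 : H ⊗[k] (H ⊗[k] H) →ₗ[k] (H ⊗[k] (H ⊗[k] H)) ⊗[k] (H ⊗[k] (H ⊗[k] H)) :=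
  (TensorProduct.tensorTensorTensorComm k H H (H ⊗[k] H) (H ⊗[k] H)).toLinearMap
    ∘ₗ TensorProduct.map Δ (comulT k H Δ)

/-- The codiagonal comultiplication of `H ⊗ (H ⊗ (H ⊗ H))`. -/
def comul4 : H ⊗[k] (H ⊗[k] (H ⊗[k] H)) →ₗ[k]
    (H ⊗[k] (H ⊗[k] (H ⊗[k] H))) ⊗[k] (H ⊗[k] (H ⊗[k] (H ⊗[k] H))) :=
  (TensorProduct.tensorTensorTensorComm k H H
      (H ⊗[k] (H ⊗[k] H)) (H ⊗[k] (H ⊗[k] H))).toLinearMap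
    ∘ₗ TensorProduct.map Δ (comul3 k H Δ)

/-- The codiagonal counit of `H ⊗ H`. -/
def counit2 : H ⊗[k] H →ₗ[k] k := (LinearMap.mul' k k) ∘ₗ TensorProduct.map ε ε

/-- The codiagonal counit of `H ⊗ (H ⊗ H)`. -/
def counit3 : H ⊗[k] (H ⊗[k] H) →ₗ[k] k :=
  (LinearMap.mul' k k) ∘ₗ TensorProduct.map ε (counit2 k H ε)

variable (μ : H ⊗[k] H →ₗ[k] H) (e : H) (ω ωInv : H ⊗[k] (H ⊗[k] H) →ₗ[k] k)

/-- A dual quasi-bialgebra structure on `H`, with comultiplication `Δ`, counit `ε`,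
multiplication `μ` (a coalgebra map, unitary and quasi-associative), unit `e`, and
unital 3-cocycle `ω` with convolution inverse `ωInv`. -/
structure IsDualQuasiBialgebra : Prop where
  coassoc : (TensorProduct.assoc k H H H).toLinearMap ∘ₗ (rTensor H Δ) ∘ₗ Δ =
    (lTensor H Δ) ∘ₗ Δ
  counit_comul : (TensorProduct.lid k H).toLinearMap ∘ₗ (rTensor H ε) ∘ₗ Δ = LinearMap.id
  comul_counit : (TensorProduct.rid k H).toLinearMap ∘ₗ (lTensor H ε) ∘ₗ Δ = LinearMap.id
  mul_comul : Δ ∘ₗ μ = (TensorProduct.map μ μ)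
    ∘ₗ (TensorProduct.tensorTensorTensorComm k H H H H).toLinearMap ∘ₗ TensorProduct.map Δ Δ
  mul_counit : ε ∘ₗ μ = counit2 k H ε
  comul_one : Δ e = e ⊗ₜ[k] e
  counit_one : ε e = 1
  one_mul : ∀ h : H, μ (e ⊗ₜ[k] h) = h
  mul_one : ∀ h : H, μ (h ⊗ₜ[k] e) = h
  omega_invL : conv k (H ⊗[k] (H ⊗[k] H)) (comul3 k H Δ) ω ωInv = counit3 k H ε
  omega_invR : conv k (H ⊗[k] (H ⊗[k] H)) (comul3 k H Δ) ωInv ω = counit3 k H ε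
  omega_unital₁ : ∀ h l : H, ω (e ⊗ₜ[k] (h ⊗ₜ[k] l)) = ε h * ε l
  omega_unital₂ : ∀ h l : H, ω (h ⊗ₜ[k] (e ⊗ₜ[k] l)) = ε h * ε l
  omega_unital₃ : ∀ h l : H, ω (h ⊗ₜ[k] (l ⊗ₜ[k] e)) = ε h * ε l
  quasi_assoc : convMK k (H ⊗[k] (H ⊗[k] H)) H (comul3 k H Δ) (μ ∘ₗ lTensor H μ) ω =
    convKM k (H ⊗[k] (H ⊗[k] H)) H (comul3 k H Δ) ω
      (μ ∘ₗ rTensor H μ ∘ₗ (TensorProduct.assoc k H H H).symm.toLinearMap)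
  cocycle : conv k (H ⊗[k] (H ⊗[k] (H ⊗[k] H))) (comul4 k H Δ)
      (ω ∘ₗ lTensor H (lTensor H μ))
      (ω ∘ₗ rTensor (H ⊗[k] H) μ ∘ₗ (TensorProduct.assoc k H H (H ⊗[k] H)).symm.toLinearMap) =
    conv k (H ⊗[k] (H ⊗[k] (H ⊗[k] H))) (comul4 k H Δ)
      (conv k (H ⊗[k] (H ⊗[k] (H ⊗[k] H))) (comul4 k H Δ)
        ((LinearMap.mul' k k) ∘ₗ TensorProduct.map ε ω)
        (ω ∘ₗ lTensor H (rTensor H μ ∘ₗ (TensorProduct.assoc k H H H).symm.toLinearMap)))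
      ((LinearMap.mul' k k) ∘ₗ TensorProduct.map ω ε
        ∘ₗ (TensorProduct.assoc k H (H ⊗[k] H) H).symm.toLinearMap
        ∘ₗ lTensor H (TensorProduct.assoc k H H H).symm.toLinearMap)

/-- A preantipode `S` for a dual quasi-bialgebra. -/
structure IsPreantipode (S : H →ₗ[k] H) : Prop where
  cond1 : (rTensor H μ) ∘ₗ exch k H H H ∘ₗ (rTensor H (Δ ∘ₗ S)) ∘ₗ Δ =
    (TensorProduct.mk k H H e) ∘ₗ S
  cond2 : (lTensor H μ) ∘ₗ exch' k H H H ∘ₗ (lTensor H (Δ ∘ₗ S)) ∘ₗ Δ =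
    ((TensorProduct.mk k H H).flip e) ∘ₗ S
  cond3 : ω ∘ₗ (lTensor H (rTensor H S)) ∘ₗ comul2 k H Δ = ε

end DQB

namespace DQB

open TensorProduct LinearMap

variable (k : Type*) [CommRing k] (H : Type*) [AddCommGroup H] [Module k H]
variable (Δ : H →ₗ[k] H ⊗[k] H) (μ : H ⊗[k] H →ₗ[k] H)
variable (ωInv : H ⊗[k] (H ⊗[k] H) →ₗ[k] k)
variable (V : Type*) [AddCommGroup V] [Module k V] (ρV : V →ₗ[k] H ⊗[k] V)

/-- The left coaction `v ⊗ h ↦ v₋₁h₁ ⊗ (v₀ ⊗ h₂)` on `V ⊗ H`. -/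
def tensCoactL : V ⊗[k] H →ₗ[k] H ⊗[k] (V ⊗[k] H) :=
  rTensor (V ⊗[k] H) μ
    ∘ₗ (TensorProduct.tensorTensorTensorComm k H V H H).toLinearMap
    ∘ₗ TensorProduct.map ρV Δ

/-- The right coaction `v ⊗ h ↦ (v ⊗ h₁) ⊗ h₂` on `V ⊗ H`. -/
def tensCoactR : V ⊗[k] H →ₗ[k] (V ⊗[k] H) ⊗[k] H :=
  (TensorProduct.assoc k V H H).symm.toLinearMap ∘ₗ lTensor V Δ

/-- The right action `(v ⊗ h) · l := ω⁻¹(v₋₁ ⊗ h₁ ⊗ l₁) v₀ ⊗ h₂l₂` on `V ⊗ H`. -/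
def tensAct : (V ⊗[k] H) ⊗[k] H →ₗ[k] V ⊗[k] H :=
  (TensorProduct.lid k (V ⊗[k] H)).toLinearMap
    ∘ₗ TensorProduct.map (ωInv ∘ₗ (TensorProduct.assoc k H H H).toLinearMap)
        (lTensor V μ ∘ₗ (TensorProduct.assoc k V H H).toLinearMap)
    ∘ₗ (TensorProduct.tensorTensorTensorComm k (H ⊗[k] H) (V ⊗[k] H) H H).toLinearMap
    ∘ₗ TensorProduct.map
        ((TensorProduct.tensorTensorTensorComm k H V H H).toLinearMap
          ∘ₗ TensorProduct.map ρV Δ) Δ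

end DQB

open DQB TensorProduct LinearMap in
/-- For a dual quasi-bialgebra `H` and left `H`-comodule `V`, the map
`v ↦ v ⊗ 1_H` is a bijection from `V` onto the right coinvariants of the dual quasi-Hopf
bicomodule `V ⊗ H`, with inverse induced by `v ⊗ h ↦ ε(h)v`. -/
theorem tens_coinvariants_equiv (k : Type*) [Field k]
    (H : Type*) [AddCommGroup H] [Module k H]
    (Δ : H →ₗ[k] H ⊗[k] H) (ε : H →ₗ[k] k) (μ : H ⊗[k] H →ₗ[k] H) (e : H)
    (ω ωInv : H ⊗[k] (H ⊗[k] H) →ₗ[k] k)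
    (hH : IsDualQuasiBialgebra k H Δ ε μ e ω ωInv)
    (V : Type*) [AddCommGroup V] [Module k V] (ρV : V →ₗ[k] H ⊗[k] V)
    (hcoassoc : (rTensor V Δ) ∘ₗ ρV =
      (TensorProduct.assoc k H H V).symm.toLinearMap ∘ₗ (lTensor H ρV) ∘ₗ ρV)
    (hcounit : (TensorProduct.lid k V).toLinearMap ∘ₗ (rTensor V ε) ∘ₗ ρV = LinearMap.id) :
    (∀ v : V, tensCoactR k H Δ V (v ⊗ₜ[k] e) = (v ⊗ₜ[k] e) ⊗ₜ[k] e) ∧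
    (∀ x : V ⊗[k] H, tensCoactR k H Δ V x = x ⊗ₜ[k] e →
      (((TensorProduct.rid k V).toLinearMap ∘ₗ lTensor V ε) x) ⊗ₜ[k] e = x) ∧
    (∀ v : V, ((TensorProduct.rid k V).toLinearMap ∘ₗ lTensor V ε) (v ⊗ₜ[k] e) = v) := by
  set f : V ⊗[k] H →ₗ[k] V := (TensorProduct.rid k V).toLinearMap ∘ₗ lTensor V ε with hf
  refine ⟨?_, ?_, ?_⟩
  · intro v
    simp [tensCoactR, hH.comul_one]
  · intro x hx
    have hA : rTensor H f ∘ₗ (TensorProduct.assoc k V H H).symm.toLinearMap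
        = lTensor V ((TensorProduct.lid k H).toLinearMap ∘ₗ rTensor H ε) := by
      apply TensorProduct.ext
      apply LinearMap.ext; intro v
      apply TensorProduct.ext'
      intro h l
      simp only [hf, LinearMap.compr₂ₛₗ_apply, TensorProduct.mk_apply, LinearMap.comp_apply, LinearEquiv.coe_coe,
        TensorProduct.assoc_symm_tmul, rTensor_tmul, lTensor_tmul,
        TensorProduct.lid_tmul, TensorProduct.rid_tmul]
      rw [TensorProduct.smul_tmul]
    have key : (rTensor H f) (tensCoactR k H Δ V x) = x := by
      have : rTensor H f ∘ₗ tensCoactR k H Δ V = LinearMap.id := by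
        unfold tensCoactR
        rw [← LinearMap.comp_assoc, hA, ← lTensor_comp, LinearMap.comp_assoc,
          hH.counit_comul, lTensor_id]
      calc (rTensor H f) (tensCoactR k H Δ V x)
          = (rTensor H f ∘ₗ tensCoactR k H Δ V) x := rfl
        _ = x := by rw [this]; rfl
    rw [hx, rTensor_tmul] at key
    exact key
  · intro v
    simp [hf, hH.counit_one]
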